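/- Let a ∈ ℝ^n be a random vector, and for each realization of a and each h ∈ ℝ^n define g_a(h) = ∑_{s∈S} p_{aᵀh₀}(s) log p_{aᵀh}(s), the negative cross entropy of the PMFs obtained by quantizing N(aᵀh₀, 1/2) and N(aᵀh, 1/2) by a fixed finite interval partition. Then f(h) = E_a[g_a(h)] is concave in h and attains its maximum at h = h₀. -/

import Mathlib

open MeasureTheory ProbabilityTheory

open Real Set Filter Topology

noncomputable def auxE (t : ℝ) : ℝ := ∫ y in (0:ℝ)..t, Real.exp (-y^2)

lemma aux_cont : Continuous fun y : ℝ => Real.exp (-y^2) := by fun_prop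

lemma aux_integrable : Integrable (fun y : ℝ => Real.exp (-y^2)) := by
  simpa using integrable_exp_neg_mul_sq (one_pos)

lemma aux_m_integrable : Integrable (fun y : ℝ => 2*y*Real.exp (-y^2)) := by
  have := (integrable_mul_exp_neg_mul_sq (one_pos)).const_mul 2
  simpa [mul_assoc] using this

lemma aux_hasDerivAt_E (t : ℝ) : HasDerivAt auxE (Real.exp (-t^2)) t := by
  exact intervalIntegral.integral_hasDerivAt_right
    (aux_integrable.intervalIntegrable)
    (aux_cont.stronglyMeasurable.stronglyMeasurableAtFilter)
    aux_cont.continuousAt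

lemma aux_hasDerivAt_negexp (y : ℝ) :
    HasDerivAt (fun y : ℝ => -Real.exp (-y^2)) (2*y*Real.exp (-y^2)) y := by
  have h : HasDerivAt (fun y : ℝ => -y^2) (-(2*y)) y := by
    exact ((hasDerivAt_pow 2 y).neg).congr_deriv (by norm_num)
  have := (h.exp).neg
  exact this.congr_deriv (by ring)

lemma aux_I1 (α β : ℝ) :
    ∫ y in α..β, 2*y*Real.exp (-y^2) = Real.exp (-α^2) - Real.exp (-β^2) := by
  have := intervalIntegral.integral_eq_sub_of_hasDerivAt
    (a := α) (b := β)
    (f := fun y : ℝ => -Real.exp (-y^2)) (f' := fun y : ℝ => 2*y*Real.exp (-y^2))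
    (fun y _ => aux_hasDerivAt_negexp y) (aux_m_integrable.intervalIntegrable)
  rw [this]; ring

lemma aux_tendsto_bot : Tendsto (fun y : ℝ => -Real.exp (-y^2)) atBot (𝓝 0) := by
  have h1 : Tendsto (fun y : ℝ => -y^2) atBot atBot := by
    have h2 : Tendsto (fun y : ℝ => (-y)^2) atBot atTop :=
      (tendsto_pow_atTop (two_ne_zero)).comp tendsto_neg_atBot_atTop
    have : Tendsto (fun y : ℝ => y^2) atBot atTop := by simpa [neg_sq] using h2
    exact (tendsto_neg_atTop_atBot).comp this
  have := (Real.tendsto_exp_atBot.comp h1).neg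
  simpa using this

lemma aux_tendsto_top : Tendsto (fun y : ℝ => -Real.exp (-y^2)) atTop (𝓝 0) := by
  have h1 : Tendsto (fun y : ℝ => -y^2) atTop atBot := by
    have : Tendsto (fun y : ℝ => y^2) atTop atTop := tendsto_pow_atTop (two_ne_zero)
    exact (tendsto_neg_atTop_atBot).comp this
  have := (Real.tendsto_exp_atBot.comp h1).neg
  simpa using this

lemma aux_I2 (β : ℝ) :
    ∫ y in Iic β, 2*y*Real.exp (-y^2) = -Real.exp (-β^2) := by
  have := integral_Iic_of_hasDerivAt_of_tendsto'
    (f := fun y : ℝ => -Real.exp (-y^2)) (f' := fun y : ℝ => 2*y*Real.exp (-y^2))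
    (m := 0) (a := β) (fun x _ => aux_hasDerivAt_negexp x) (aux_m_integrable.integrableOn)
    aux_tendsto_bot
  rw [this]; ring

lemma aux_I3 (α : ℝ) :
    ∫ y in Ioi α, 2*y*Real.exp (-y^2) = Real.exp (-α^2) := by
  have := integral_Ioi_of_hasDerivAt_of_tendsto'
    (f := fun y : ℝ => -Real.exp (-y^2)) (f' := fun y : ℝ => 2*y*Real.exp (-y^2))
    (m := 0) (a := α) (fun x _ => aux_hasDerivAt_negexp x) (aux_m_integrable.integrableOn)
    aux_tendsto_top
  rw [this]; ring

lemma aux_E_sub (α β : ℝ) : auxE β - auxE α = ∫ y in α..β, Real.exp (-y^2) := by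
  exact intervalIntegral.integral_interval_sub_left
    (aux_integrable.intervalIntegrable) (aux_integrable.intervalIntegrable)

lemma aux_K1a {α β : ℝ} (h : α ≤ β) :
    2*α*(auxE β - auxE α) ≤ Real.exp (-α^2) - Real.exp (-β^2) := by
  rw [aux_E_sub, ← aux_I1 α β, ← intervalIntegral.integral_const_mul]
  apply intervalIntegral.integral_mono_on h
    ((aux_integrable.const_mul _).intervalIntegrable) (aux_m_integrable.intervalIntegrable)
  intro y hy
  have := (Real.exp_pos (-y^2)).le
  nlinarith [hy.1]

lemma aux_K1b {α β : ℝ} (h : α ≤ β) :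
    Real.exp (-α^2) - Real.exp (-β^2) ≤ 2*β*(auxE β - auxE α) := by
  rw [aux_E_sub, ← aux_I1 α β, ← intervalIntegral.integral_const_mul]
  apply intervalIntegral.integral_mono_on h
    (aux_m_integrable.intervalIntegrable) ((aux_integrable.const_mul _).intervalIntegrable)
  intro y hy
  have := (Real.exp_pos (-y^2)).le
  nlinarith [hy.2]

lemma aux_K2 (β : ℝ) :
    -Real.exp (-β^2) ≤ 2*β*(∫ y in Iic β, Real.exp (-y^2)) := by
  rw [← aux_I2 β, ← integral_const_mul]
  apply setIntegral_mono_on (aux_m_integrable.integrableOn)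
    ((aux_integrable.const_mul _).integrableOn) measurableSet_Iic
  intro y hy
  have := (Real.exp_pos (-y^2)).le
  nlinarith [(mem_Iic.mp hy)]

lemma aux_K3 (α : ℝ) :
    2*α*(∫ y in Ioi α, Real.exp (-y^2)) ≤ Real.exp (-α^2) := by
  rw [← aux_I3 α, ← integral_const_mul]
  apply setIntegral_mono_on ((aux_integrable.const_mul _).integrableOn)
    (aux_m_integrable.integrableOn) measurableSet_Ioi
  intro y hy
  have := (Real.exp_pos (-y^2)).le
  nlinarith [(mem_Ioi.mp hy).le]

lemma aux_logconc {N N' N'' : ℝ → ℝ} (hN : ∀ μ, 0 < N μ)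
    (h1 : ∀ μ, HasDerivAt N (N' μ) μ) (h2 : ∀ μ, HasDerivAt N' (N'' μ) μ)
    (key : ∀ μ, N'' μ * N μ ≤ N' μ ^ 2) :
    ConcaveOn ℝ Set.univ (fun μ => Real.log (N μ)) := by
  have hL : ∀ μ, HasDerivAt (fun μ => Real.log (N μ)) (N' μ / N μ) μ := by
    intro μ
    exact (h1 μ).log (hN μ).ne'
  have hderiv : deriv (fun μ => Real.log (N μ)) = fun μ => N' μ / N μ := by
    funext μ; exact (hL μ).deriv
  have hL2 : ∀ μ, HasDerivAt (fun μ => N' μ / N μ)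
      ((N'' μ * N μ - N' μ * N' μ) / (N μ)^2) μ := by
    intro μ
    exact (h2 μ).div (h1 μ) (hN μ).ne'
  apply concaveOn_univ_of_deriv2_nonpos
  · exact fun μ => (hL μ).differentiableAt
  · rw [hderiv]; exact fun μ => (hL2 μ).differentiableAt
  · intro μ
    have : deriv^[2] (fun μ => Real.log (N μ)) μ =
        (N'' μ * N μ - N' μ * N' μ) / (N μ)^2 := by
      show deriv (deriv fun μ => Real.log (N μ)) μ = _
      rw [hderiv]
      exact (hL2 μ).deriv
    rw [this]
    apply div_nonpos_of_nonpos_of_nonneg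
    · nlinarith [key μ]
    · positivity

noncomputable def auxC : ℝ := ∫ y in Iic (0:ℝ), Real.exp (-y^2)

lemma aux_Iic_val (t : ℝ) : ∫ y in Iic t, Real.exp (-y^2) = auxC + auxE t := by
  have := intervalIntegral.integral_Iic_sub_Iic (f := fun y : ℝ => Real.exp (-y^2)) (μ := volume)
    (aux_integrable.integrableOn) (aux_integrable.integrableOn) (a := 0) (b := t)
  unfold auxC auxE
  linarith [this]

lemma aux_total : ∫ y : ℝ, Real.exp (-y^2) = Real.sqrt π := by
  simpa using integral_gaussian 1

lemma aux_Ioi_val (t : ℝ) :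
    ∫ y in Ioi t, Real.exp (-y^2) = Real.sqrt π - (auxC + auxE t) := by
  have := intervalIntegral.integral_Iic_add_Ioi (b := t) (f := fun y : ℝ => Real.exp (-y^2)) (μ := volume)
    (aux_integrable.integrableOn) (aux_integrable.integrableOn)
  rw [aux_Iic_val] at this
  rw [← aux_total]
  linarith [this]

lemma aux_Iic_pos (t : ℝ) : 0 < auxC + auxE t := by
  rw [← aux_Iic_val]
  rw [setIntegral_pos_iff_support_of_nonneg_ae]
  · have : (Function.support fun y : ℝ => Real.exp (-y^2)) = Set.univ := by
      ext y; simp [Function.support, (Real.exp_pos (-y^2)).ne']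
    rw [this]
    simp only [Set.univ_inter]
    simp [Real.volume_Iic]
  · exact Eventually.of_forall fun y => (Real.exp_pos (-y^2)).le
  · exact aux_integrable.integrableOn

lemma aux_Ioi_pos (t : ℝ) : 0 < Real.sqrt π - (auxC + auxE t) := by
  rw [← aux_Ioi_val]
  rw [setIntegral_pos_iff_support_of_nonneg_ae]
  · have : (Function.support fun y : ℝ => Real.exp (-y^2)) = Set.univ := by
      ext y; simp [Function.support, (Real.exp_pos (-y^2)).ne']
    rw [this]
    simp only [Set.univ_inter]
    simp [Real.volume_Ioi]
  · exact Eventually.of_forall fun y => (Real.exp_pos (-y^2)).le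
  · exact aux_integrable.integrableOn

lemma aux_hasDerivAt_Ecomp (c μ : ℝ) :
    HasDerivAt (fun μ : ℝ => auxE (c - μ)) (-Real.exp (-(c-μ)^2)) μ := by
  have hu : HasDerivAt (fun μ : ℝ => c - μ) (-1) μ := by
    exact (hasDerivAt_id μ).const_sub c
  have := (aux_hasDerivAt_E (c - μ)).comp μ hu
  exact this.congr_deriv (by ring)

lemma aux_hasDerivAt_fcomp (c μ : ℝ) :
    HasDerivAt (fun μ : ℝ => Real.exp (-(c-μ)^2)) (2*(c-μ)*Real.exp (-(c-μ)^2)) μ := by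
  have hu : HasDerivAt (fun μ : ℝ => c - μ) (-1) μ := by
    exact (hasDerivAt_id μ).const_sub c
  have h := (aux_hasDerivAt_negexp (c - μ)).comp μ hu
  have h2 := h.neg
  have : (fun μ : ℝ => Real.exp (-(c-μ)^2)) = fun μ => -((fun y : ℝ => -Real.exp (-y^2)) (c - μ)) := by
    funext x; simp
  rw [this]
  exact h2.congr_deriv (by ring)

lemma aux_conc_Ico (a b : ℝ) (hab : a < b) :
    ConcaveOn ℝ Set.univ (fun μ : ℝ => Real.log (auxE (b-μ) - auxE (a-μ))) := by
  have hpos : ∀ μ : ℝ, 0 < auxE (b-μ) - auxE (a-μ) := by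
    intro μ
    rw [aux_E_sub]
    apply intervalIntegral.intervalIntegral_pos_of_pos_on
      (aux_integrable.intervalIntegrable)
      (fun y _ => Real.exp_pos _) (by linarith)
  apply aux_logconc (N' := fun μ => Real.exp (-(a-μ)^2) - Real.exp (-(b-μ)^2))
    (N'' := fun μ => 2*(a-μ)*Real.exp (-(a-μ)^2) - 2*(b-μ)*Real.exp (-(b-μ)^2)) hpos
  · intro μ
    have := (aux_hasDerivAt_Ecomp b μ).sub (aux_hasDerivAt_Ecomp a μ)
    exact this.congr_deriv (by ring)
  · intro μ
    exact (aux_hasDerivAt_fcomp a μ).sub (aux_hasDerivAt_fcomp b μ)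
  · intro μ
    have hle : a - μ ≤ b - μ := by linarith
    have h1 := aux_K1a hle
    have h2 := aux_K1b hle
    have e1 := (Real.exp_pos (-(a-μ)^2)).le
    have e2 := (Real.exp_pos (-(b-μ)^2)).le
    nlinarith [mul_le_mul_of_nonneg_left h1 e1, mul_le_mul_of_nonneg_left h2 e2]

lemma aux_conc_Iio (b : ℝ) :
    ConcaveOn ℝ Set.univ (fun μ : ℝ => Real.log (auxC + auxE (b-μ))) := by
  apply aux_logconc (N' := fun μ => -Real.exp (-(b-μ)^2))
    (N'' := fun μ => -(2*(b-μ)*Real.exp (-(b-μ)^2))) (fun μ => aux_Iic_pos (b-μ))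
  · intro μ
    exact (aux_hasDerivAt_Ecomp b μ).const_add auxC
  · intro μ
    exact (aux_hasDerivAt_fcomp b μ).neg
  · intro μ
    have h2 := aux_K2 (b-μ)
    rw [aux_Iic_val] at h2
    have e2 := (Real.exp_pos (-(b-μ)^2)).le
    nlinarith [mul_le_mul_of_nonneg_left h2 e2]

lemma aux_conc_Ici (a : ℝ) :
    ConcaveOn ℝ Set.univ (fun μ : ℝ => Real.log (Real.sqrt π - (auxC + auxE (a-μ)))) := by
  apply aux_logconc (N' := fun μ => Real.exp (-(a-μ)^2))
    (N'' := fun μ => 2*(a-μ)*Real.exp (-(a-μ)^2)) (fun μ => aux_Ioi_pos (a-μ))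
  · intro μ
    have := ((aux_hasDerivAt_Ecomp a μ).const_add auxC).const_sub (Real.sqrt π)
    exact this.congr_deriv (by ring)
  · intro μ
    exact aux_hasDerivAt_fcomp a μ
  · intro μ
    have h3 := aux_K3 (a-μ)
    rw [aux_Ioi_val] at h3
    have e1 := (Real.exp_pos (-(a-μ)^2)).le
    nlinarith [mul_le_mul_of_nonneg_left h3 e1]

noncomputable def auxQ (A : Set ℝ) (μ : ℝ) : ℝ := ((gaussianReal μ (1/2)) A).toReal

lemma aux_half_ne : (1/2 : NNReal) ≠ 0 := by norm_num

lemma auxQ_eq (A : Set ℝ) (μ : ℝ) :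
    auxQ A μ = (Real.sqrt π)⁻¹ * ∫ x in A, Real.exp (-(x-μ)^2) := by
  unfold auxQ
  rw [gaussianReal_apply_eq_integral μ aux_half_ne A]
  rw [ENNReal.toReal_ofReal (setIntegral_nonneg_of_ae
    (Eventually.of_forall (fun x => gaussianPDFReal_nonneg μ _ x)))]
  rw [← integral_const_mul]
  congr 1
  funext x
  rw [gaussianPDFReal]
  norm_num
  have h2 : Real.sqrt 2 ≠ 0 := by positivity
  field_simp

lemma aux_transl (s : Set ℝ) (μ : ℝ) :
    ∫ x in (fun x : ℝ => x - μ) ⁻¹' s, Real.exp (-(x-μ)^2) = ∫ y in s, Real.exp (-y^2) :=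
  (measurePreserving_sub_right volume μ).setIntegral_preimage_emb
    (MeasurableEquiv.subRight μ).measurableEmbedding (fun y => Real.exp (-y^2)) s

lemma auxJ_Iio (b μ : ℝ) :
    ∫ x in Iio b, Real.exp (-(x-μ)^2) = auxC + auxE (b-μ) := by
  rw [← integral_Iic_eq_integral_Iio]
  have hs : (fun x : ℝ => x - μ) ⁻¹' (Iic (b - μ)) = Iic b := by
    ext x; simp [sub_le_sub_iff_right]
  rw [← hs, aux_transl, aux_Iic_val]

lemma auxJ_Ici (a μ : ℝ) :
    ∫ x in Ici a, Real.exp (-(x-μ)^2) = Real.sqrt π - (auxC + auxE (a-μ)) := by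
  rw [integral_Ici_eq_integral_Ioi]
  have hs : (fun x : ℝ => x - μ) ⁻¹' (Ioi (a - μ)) = Ioi a := by
    ext x; simp [sub_lt_sub_iff_right]
  rw [← hs, aux_transl, aux_Ioi_val]

lemma auxJ_Ico (a b μ : ℝ) (hab : a ≤ b) :
    ∫ x in Ico a b, Real.exp (-(x-μ)^2) = auxE (b-μ) - auxE (a-μ) := by
  rw [integral_Ico_eq_integral_Ioo, ← integral_Ioc_eq_integral_Ioo,
    ← intervalIntegral.integral_of_le hab]
  rw [intervalIntegral.integral_comp_sub_right (fun y => Real.exp (-y^2)) μ]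
  rw [aux_E_sub]

lemma auxJ_univ (μ : ℝ) :
    ∫ x : ℝ, Real.exp (-(x-μ)^2) = Real.sqrt π := by
  rw [← aux_total]
  exact integral_sub_right_eq_self (fun y => Real.exp (-y^2)) μ

lemma aux_sqrtpi_ne : (Real.sqrt π)⁻¹ ≠ 0 := by
  have : 0 < Real.sqrt π := Real.sqrt_pos.mpr Real.pi_pos
  positivity

lemma auxQ_conc (A : Set ℝ)
    (h : A = ∅ ∨ A = Set.univ ∨ (∃ a, A = Ici a) ∨ (∃ b, A = Iio b) ∨ ∃ a b, A = Ico a b) :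
    ConcaveOn ℝ Set.univ fun μ => Real.log (auxQ A μ) := by
  rcases h with rfl | rfl | ⟨a, rfl⟩ | ⟨b, rfl⟩ | ⟨a, b, rfl⟩
  · have : (fun μ : ℝ => Real.log (auxQ ∅ μ)) = fun _ => (0:ℝ) := by
      funext μ; simp [auxQ]
    rw [this]; exact concaveOn_const _ convex_univ
  · have : (fun μ : ℝ => Real.log (auxQ Set.univ μ)) = fun _ => (0:ℝ) := by
      funext μ; simp [auxQ]
    rw [this]; exact concaveOn_const _ convex_univ
  · have : (fun μ : ℝ => Real.log (auxQ (Ici a) μ)) =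
        fun μ => Real.log (Real.sqrt π)⁻¹ + Real.log (Real.sqrt π - (auxC + auxE (a-μ))) := by
      funext μ
      rw [auxQ_eq, auxJ_Ici, Real.log_mul aux_sqrtpi_ne (aux_Ioi_pos (a-μ)).ne']
    rw [this]
    exact (concaveOn_const _ convex_univ).add (aux_conc_Ici a)
  · have : (fun μ : ℝ => Real.log (auxQ (Iio b) μ)) =
        fun μ => Real.log (Real.sqrt π)⁻¹ + Real.log (auxC + auxE (b-μ)) := by
      funext μ
      rw [auxQ_eq, auxJ_Iio, Real.log_mul aux_sqrtpi_ne (aux_Iic_pos (b-μ)).ne']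
    rw [this]
    exact (concaveOn_const _ convex_univ).add (aux_conc_Iio b)
  · by_cases hab : a < b
    · have : (fun μ : ℝ => Real.log (auxQ (Ico a b) μ)) =
          fun μ => Real.log (Real.sqrt π)⁻¹ + Real.log (auxE (b-μ) - auxE (a-μ)) := by
        funext μ
        have hpos : 0 < auxE (b-μ) - auxE (a-μ) := by
          rw [aux_E_sub]
          exact intervalIntegral.intervalIntegral_pos_of_pos_on
            (aux_integrable.intervalIntegrable) (fun y _ => Real.exp_pos _) (by linarith)
        rw [auxQ_eq, auxJ_Ico a b μ hab.le, Real.log_mul aux_sqrtpi_ne hpos.ne']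
      rw [this]
      exact (concaveOn_const _ convex_univ).add (aux_conc_Ico a b hab)
    · have : Ico a b = (∅ : Set ℝ) := Ico_eq_empty hab
      rw [this]
      have : (fun μ : ℝ => Real.log (auxQ ∅ μ)) = fun _ => (0:ℝ) := by
        funext μ; simp [auxQ]
      rw [this]; exact concaveOn_const _ convex_univ

lemma aux_shape (l u : EReal) :
    {x : ℝ | l ≤ (x:EReal) ∧ (x:EReal) < u} = ∅ ∨
    {x : ℝ | l ≤ (x:EReal) ∧ (x:EReal) < u} = Set.univ ∨
    (∃ a, {x : ℝ | l ≤ (x:EReal) ∧ (x:EReal) < u} = Ici a) ∨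
    (∃ b, {x : ℝ | l ≤ (x:EReal) ∧ (x:EReal) < u} = Iio b) ∨
    ∃ a b, {x : ℝ | l ≤ (x:EReal) ∧ (x:EReal) < u} = Ico a b := by
  induction l using EReal.rec with
  | bot =>
    induction u using EReal.rec with
    | bot => left; ext x; simp
    | coe b =>
      right; right; right; left; exact ⟨b, by ext x; simp [EReal.coe_lt_coe_iff]⟩
    | top => right; left; ext x; simp [EReal.coe_lt_top]
  | coe a =>
    induction u using EReal.rec with
    | bot => left; ext x; simp
    | coe b =>
      right; right; right; right
      exact ⟨a, b, by ext x; simp [EReal.coe_le_coe_iff, EReal.coe_lt_coe_iff, mem_Ico]⟩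
    | top =>
      right; right; left
      exact ⟨a, by ext x; simp [EReal.coe_le_coe_iff, EReal.coe_lt_top]⟩
  | top =>
    left; ext x
    simp only [mem_setOf_eq, mem_empty_iff_false, iff_false, not_and]
    intro hx
    exact absurd hx (by simp)

lemma aux_gibbs {S : Type*} [Fintype S] (c q : S → ℝ) (hc : ∀ s, 0 ≤ c s)
    (hq : ∀ s, 0 ≤ q s) (hcs : ∑ s, c s = 1) (hqs : ∑ s, q s = 1)
    (hpos : ∀ s, c s ≠ 0 → 0 < q s) :
    ∑ s, c s * Real.log (q s) ≤ ∑ s, c s * Real.log (c s) := by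
  have key : ∀ s, c s * Real.log (q s) - c s * Real.log (c s) ≤ q s - c s := by
    intro s
    rcases eq_or_ne (c s) 0 with h | h
    · simp [h, hq s]
    · have hcp : 0 < c s := lt_of_le_of_ne (hc s) (Ne.symm h)
      have hqp : 0 < q s := hpos s h
      have h1 : Real.log (q s / c s) ≤ q s / c s - 1 :=
        Real.log_le_sub_one_of_pos (by positivity)
      have h2 : Real.log (q s / c s) = Real.log (q s) - Real.log (c s) :=
        Real.log_div hqp.ne' hcp.ne'
      rw [h2] at h1
      have := mul_le_mul_of_nonneg_left h1 hcp.le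
      calc c s * Real.log (q s) - c s * Real.log (c s)
          = c s * (Real.log (q s) - Real.log (c s)) := by ring
        _ ≤ c s * (q s / c s - 1) := this
        _ = q s - c s := by field_simp
  have hsum := Finset.sum_le_sum (s := Finset.univ) (fun s _ => key s)
  rw [Finset.sum_sub_distrib, Finset.sum_sub_distrib, hcs, hqs] at hsum
  linarith

/-- Lemma 1 of the paper: let `a ∈ ℝⁿ` be a random vector and, for a fixed finite interval
partition `{[ℓ_s, u_s)}_{s ∈ S}` of `ℝ` (with possibly infinite endpoints), let
`p_μ(s) = P(N(μ, 1/2) ∈ [ℓ_s, u_s))` and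
`g_a(h) = ∑ s, p_{aᵀh₀}(s) log p_{aᵀh}(s)` be the negative cross entropy of the quantized
Gaussians. Then `f(h) = E_a[g_a(h)]` is concave in `h` and attains its maximum at `h = h₀`. -/
theorem asymptotic_cv_concave_max {Ω : Type*} [MeasurableSpace Ω] (P : Measure Ω)
    [IsProbabilityMeasure P] {n : ℕ} {S : Type*} [Fintype S]
    (l u : S → EReal)
    (hpart : ∀ x : ℝ, ∃! s : S, l s ≤ (x : EReal) ∧ (x : EReal) < u s)
    (a : Ω → Fin n → ℝ) (hmeas : Measurable a)
    (h₀ : EuclideanSpace ℝ (Fin n))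
    (p : ℝ → S → ℝ)
    (hp : ∀ μ s, p μ s =
      ((gaussianReal μ (1 / 2)) {x : ℝ | l s ≤ (x : EReal) ∧ (x : EReal) < u s}).toReal)
    (F : EuclideanSpace ℝ (Fin n) → ℝ)
    (hF : F = fun h => ∫ ω, ∑ s,
      p (∑ j, a ω j * h₀ j) s * Real.log (p (∑ j, a ω j * h j) s) ∂P)
    (hint : ∀ h : EuclideanSpace ℝ (Fin n), Integrable (fun ω => ∑ s,
      p (∑ j, a ω j * h₀ j) s * Real.log (p (∑ j, a ω j * h j) s)) P) :
    ConcaveOn ℝ Set.univ F ∧ ∀ h, F h ≤ F h₀ := by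

  have hnn : ∀ (μ : ℝ) (s : S), 0 ≤ p μ s := fun μ s => by
    rw [hp]; exact ENNReal.toReal_nonneg
  have hconc : ∀ s : S, ConcaveOn ℝ Set.univ fun μ => Real.log (p μ s) := by
    intro s
    have h2 := auxQ_conc {x : ℝ | l s ≤ (x:EReal) ∧ (x:EReal) < u s}
      (aux_shape (l s) (u s))
    have h3 : (fun μ => Real.log (p μ s)) =
        fun μ => Real.log (auxQ {x : ℝ | l s ≤ (x:EReal) ∧ (x:EReal) < u s} μ) := by
      funext μ; rw [hp]; rfl
    rw [h3]; exact h2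
  have hmeasA : ∀ s : S, MeasurableSet {x : ℝ | l s ≤ (x:EReal) ∧ (x:EReal) < u s} := by
    intro s
    rcases aux_shape (l s) (u s) with h|h|⟨a',h⟩|⟨b',h⟩|⟨a',b',h⟩ <;> rw [h]
    · exact MeasurableSet.empty
    · exact MeasurableSet.univ
    · exact measurableSet_Ici
    · exact measurableSet_Iio
    · exact measurableSet_Ico
  have hsum : ∀ μ : ℝ, ∑ s, p μ s = 1 := by
    intro μ
    have hdisj : Pairwise (Function.onFun Disjoint
        fun s : S => {x : ℝ | l s ≤ (x:EReal) ∧ (x:EReal) < u s}) := by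
      intro s t hst
      rw [Function.onFun, Set.disjoint_left]
      intro x hxs hxt
      obtain ⟨s', -, huniq⟩ := hpart x
      exact hst ((huniq s hxs).trans (huniq t hxt).symm)
    have hcover : (⋃ s : S, {x : ℝ | l s ≤ (x:EReal) ∧ (x:EReal) < u s}) = Set.univ := by
      ext x
      simp only [Set.mem_iUnion, Set.mem_univ, iff_true]
      obtain ⟨s, hs, -⟩ := hpart x
      exact ⟨s, hs⟩
    have hU := measure_iUnion (μ := gaussianReal μ (1/2)) hdisj hmeasA
    rw [hcover, measure_univ, tsum_fintype] at hU
    have h2 : ∑ s, p μ s =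
        (∑ s, (gaussianReal μ (1/2)) {x : ℝ | l s ≤ (x:EReal) ∧ (x:EReal) < u s}).toReal := by
      rw [ENNReal.toReal_sum (fun s _ => measure_ne_top _ _)]
      exact Finset.sum_congr rfl fun s _ => hp μ s
    rw [h2, ← hU]
    simp
  have hpos : ∀ (ν μ : ℝ) (s : S), p ν s ≠ 0 → 0 < p μ s := by
    intro ν μ s hne
    have h1 : (gaussianReal ν (1/2)) {x : ℝ | l s ≤ (x:EReal) ∧ (x:EReal) < u s} ≠ 0 := by
      intro h0; apply hne; rw [hp, h0]; simp
    have hvol : volume {x : ℝ | l s ≤ (x:EReal) ∧ (x:EReal) < u s} ≠ 0 := by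
      intro h0
      exact h1 (gaussianReal_absolutelyContinuous ν aux_half_ne h0)
    have h2 : (gaussianReal μ (1/2)) {x : ℝ | l s ≤ (x:EReal) ∧ (x:EReal) < u s} ≠ 0 := by
      intro h0
      exact hvol (gaussianReal_absolutelyContinuous' μ aux_half_ne h0)
    rw [hp]
    exact ENNReal.toReal_pos h2 (measure_ne_top _ _)
  have hlin : ∀ (ω : Ω) (ta tb : ℝ) (x y : EuclideanSpace ℝ (Fin n)),
      ∑ j, a ω j * (ta • x + tb • y) j
        = ta * ∑ j, a ω j * x j + tb * ∑ j, a ω j * y j := by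
    intro ω ta tb x y
    have hj : ∀ j, a ω j * (ta • x + tb • y) j
        = ta * (a ω j * x j) + tb * (a ω j * y j) := by
      intro j
      have : (ta • x + tb • y) j = ta * x j + tb * y j := rfl
      rw [this]; ring
    rw [Finset.sum_congr rfl fun j _ => hj j, Finset.sum_add_distrib,
      ← Finset.mul_sum, ← Finset.mul_sum]
  constructor
  · refine ⟨convex_univ, ?_⟩
    intro x _ y _ ta tb hta htb hab
    simp only [smul_eq_mul, hF]
    have hptwise : ∀ ω : Ω,
        ta * (∑ s, p (∑ j, a ω j * h₀ j) s * Real.log (p (∑ j, a ω j * x j) s))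
        + tb * (∑ s, p (∑ j, a ω j * h₀ j) s * Real.log (p (∑ j, a ω j * y j) s))
        ≤ ∑ s, p (∑ j, a ω j * h₀ j) s *
            Real.log (p (∑ j, a ω j * (ta • x + tb • y) j) s) := by
      intro ω
      rw [show (fun j => a ω j * (ta • x + tb • y) j) = fun j => a ω j * (ta • x + tb • y) j from rfl]
      have hrw : ∑ s, p (∑ j, a ω j * h₀ j) s *
            Real.log (p (∑ j, a ω j * (ta • x + tb • y) j) s)
          = ∑ s, p (∑ j, a ω j * h₀ j) s *
            Real.log (p (ta * (∑ j, a ω j * x j) + tb * (∑ j, a ω j * y j)) s) := by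
        rw [hlin ω ta tb x y]
      rw [hrw, Finset.mul_sum, Finset.mul_sum, ← Finset.sum_add_distrib]
      apply Finset.sum_le_sum
      intro s _
      have hcs := (hconc s).2 (Set.mem_univ (∑ j, a ω j * x j))
        (Set.mem_univ (∑ j, a ω j * y j)) hta htb hab
      simp only [smul_eq_mul] at hcs
      have h5 := mul_le_mul_of_nonneg_left hcs (hnn (∑ j, a ω j * h₀ j) s)
      refine le_trans (le_of_eq (by ring)) h5
    calc ta * (∫ ω, ∑ s, p (∑ j, a ω j * h₀ j) s *
            Real.log (p (∑ j, a ω j * x j) s) ∂P)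
          + tb * (∫ ω, ∑ s, p (∑ j, a ω j * h₀ j) s *
            Real.log (p (∑ j, a ω j * y j) s) ∂P)
        = ∫ ω, (ta * (∑ s, p (∑ j, a ω j * h₀ j) s *
            Real.log (p (∑ j, a ω j * x j) s))
          + tb * (∑ s, p (∑ j, a ω j * h₀ j) s *
            Real.log (p (∑ j, a ω j * y j) s))) ∂P := by
          rw [integral_add ((hint x).const_mul ta) ((hint y).const_mul tb),
            integral_const_mul, integral_const_mul]
      _ ≤ ∫ ω, ∑ s, p (∑ j, a ω j * h₀ j) s *
            Real.log (p (∑ j, a ω j * (ta • x + tb • y) j) s) ∂P := by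
          exact integral_mono (((hint x).const_mul ta).add ((hint y).const_mul tb))
            (hint (ta • x + tb • y)) hptwise
  · intro h
    rw [hF]
    apply integral_mono (hint h) (hint h₀)
    intro ω
    exact aux_gibbs (fun s => p (∑ j, a ω j * h₀ j) s)
      (fun s => p (∑ j, a ω j * h j) s)
      (fun s => hnn _ s) (fun s => hnn _ s) (hsum _) (hsum _)
      (fun s hs => hpos _ _ s hs)
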